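/- Fix integers n ≥ 2 and s with 0 ≤ s ≤ n−2 and n − s even, and set c = s(s+2). Then there exist positive integers q_0, q_1, …, q_{(n+s)/2} such that the vector a := Σ_{j=0}^{(n+s)/2} q_j · (v_j ⊗ w_{(n+s+2)/2 − j}) in the tensor product model M satisfies H(a) = (−s−2)·a, (Ω − c)²(a) = 0, and (Ω − c)(a) ≠ 0. (Such a vector is a weight vector of weight −s−2 generating the indecomposable projective module T_s inside L_n ⊗ V_0.) -/

import Mathlib

/-- The tensor product model `M` of `L_n ⊗ V_0`: finitely supported functions on
`{0,…,n} × ℕ`, with standard basis vectors `v_i ⊗ w_k`. -/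
abbrev TM (n : ℕ) : Type := (Fin (n + 1) × ℕ) →₀ ℂ

/-- The basis vector `v_i ⊗ w_k` of `M`, with the convention that it is `0`
whenever `i < 0`, `i > n` or `k < 0`. -/
noncomputable def bv (n : ℕ) (i k : ℤ) : TM n :=
  if h : 0 ≤ i ∧ i < (n : ℤ) + 1 ∧ 0 ≤ k then
    Finsupp.single (⟨i.toNat, by omega⟩, k.toNat) (1 : ℂ)
  else 0

/-- The coefficient of `v_i ⊗ w_k` in `u`, interpreted as `0` for out-of-range
indices. -/
noncomputable def cf (n : ℕ) (u : TM n) (i k : ℤ) : ℂ :=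
  if h : 0 ≤ i ∧ i < (n : ℤ) + 1 ∧ 0 ≤ k then u (⟨i.toNat, by omega⟩, k.toNat) else 0

/-- `F(v_i ⊗ w_k) = (i+1)·v_{i+1} ⊗ w_k + v_i ⊗ w_{k+1}`. -/
noncomputable def FM (n : ℕ) : Module.End ℂ (TM n) :=
  Finsupp.lsum ℂ fun p => LinearMap.toSpanSingleton ℂ (TM n)
    ((((p.1 : ℕ) : ℂ) + 1) • bv n (((p.1 : ℕ) : ℤ) + 1) ((p.2 : ℤ)) +
      bv n ((p.1 : ℕ) : ℤ) ((p.2 : ℤ) + 1))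

/-- `E(v_i ⊗ w_k) = (n-i+1)·v_{i-1} ⊗ w_k - k(k-1)·v_i ⊗ w_{k-1}`. -/
noncomputable def EM (n : ℕ) : Module.End ℂ (TM n) :=
  Finsupp.lsum ℂ fun p => LinearMap.toSpanSingleton ℂ (TM n)
    (((n : ℂ) - ((p.1 : ℕ) : ℂ) + 1) • bv n (((p.1 : ℕ) : ℤ) - 1) ((p.2 : ℤ)) -
      (((p.2 : ℕ) : ℂ) * (((p.2 : ℕ) : ℂ) - 1)) • bv n ((p.1 : ℕ) : ℤ) ((p.2 : ℤ) - 1))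

/-- `H(v_i ⊗ w_k) = (n-2i-2k)·v_i ⊗ w_k`. -/
noncomputable def HM (n : ℕ) : Module.End ℂ (TM n) :=
  Finsupp.lsum ℂ fun p => LinearMap.toSpanSingleton ℂ (TM n)
    (((n : ℂ) - 2 * ((p.1 : ℕ) : ℂ) - 2 * ((p.2 : ℕ) : ℂ)) • bv n ((p.1 : ℕ) : ℤ) ((p.2 : ℤ)))

/-- The Casimir operator `Ω = H² + 2H + 4FE` on `M`. -/
noncomputable def CasM (n : ℕ) : Module.End ℂ (TM n) :=
  HM n * HM n + (2 : ℂ) • HM n + (4 : ℂ) • (FM n * EM n)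

section AuxSeq15
open Finset

/-- falling factorial over ℚ -/
noncomputable def ffq (x : ℚ) (k : ℕ) : ℚ := ∏ t ∈ Finset.range k, (x - t)

lemma ffq_zero (x : ℚ) : ffq x 0 = 1 := by simp [ffq]

lemma ffq_sub (x : ℚ) (k : ℕ) : ffq (x+1) (k+1) - ffq x (k+1) = (k+1) * ffq x k := by
  have h0 : ∀ i ∈ range k, (x + 1 - ((i+1 : ℕ) : ℚ)) = x - i := by
    intro i _; push_cast; ring
  have h1 : ffq (x+1) (k+1) = (x+1) * ffq x k := by
    rw [ffq, Finset.prod_range_succ', Finset.prod_congr rfl h0, ffq]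
    push_cast; ring
  have h2 : ffq x (k+1) = ffq x k * (x - k) := by
    rw [ffq, Finset.prod_range_succ, ffq]
  rw [h1, h2]; ring

lemma pascal_alt (m : ℕ) (g : ℕ → ℚ) :
    ∑ i ∈ range (m+2), (-1)^i * (Nat.choose (m+1) i : ℚ) * g i =
    ∑ i ∈ range (m+1), (-1)^i * (Nat.choose m i : ℚ) * (g i - g (i+1)) := by
  have L : ∑ i ∈ range (m+2), (-1)^i * (Nat.choose (m+1) i : ℚ) * g i
      = g 0 + ∑ i ∈ range (m+1), ((-1)^(i+1) * (Nat.choose m i : ℚ) * g (i+1)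
          + (-1)^(i+1) * (Nat.choose m (i+1) : ℚ) * g (i+1)) := by
    rw [Finset.sum_range_succ']
    have h : ∀ i ∈ range (m+1), (-1:ℚ)^(i+1) * (Nat.choose (m+1) (i+1) : ℚ) * g (i+1)
        = ((-1)^(i+1) * (Nat.choose m i : ℚ) * g (i+1)
          + (-1)^(i+1) * (Nat.choose m (i+1) : ℚ) * g (i+1)) := by
      intro i _
      rw [Nat.choose_succ_succ]
      push_cast; ring
    rw [Finset.sum_congr rfl h]
    simp only [pow_zero, Nat.choose_zero_right, Nat.cast_one, one_mul]
    exact add_comm _ _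
  have R2 : ∑ i ∈ range (m+1), (-1)^(i+1) * (Nat.choose m (i+1) : ℚ) * g (i+1)
      = ∑ i ∈ range (m+1), (-1)^i * (Nat.choose m i : ℚ) * g i - g 0 := by
    have h1 : ∑ i ∈ range (m+2), (-1)^i * (Nat.choose m i : ℚ) * g i
        = ∑ i ∈ range (m+1), (-1)^(i+1) * (Nat.choose m (i+1) : ℚ) * g (i+1) + g 0 := by
      rw [Finset.sum_range_succ']
      simp
    have h2 : ∑ i ∈ range (m+2), (-1)^i * (Nat.choose m i : ℚ) * g i
        = ∑ i ∈ range (m+1), (-1)^i * (Nat.choose m i : ℚ) * g i := by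
      rw [Finset.sum_range_succ]
      simp
    linarith
  rw [L, Finset.sum_add_distrib, R2]
  have R3 : ∑ i ∈ range (m+1), (-1)^i * (Nat.choose m i : ℚ) * (g i - g (i+1))
      = ∑ i ∈ range (m+1), (-1)^i * (Nat.choose m i : ℚ) * g i
        + ∑ i ∈ range (m+1), (-1)^(i+1) * (Nat.choose m i : ℚ) * g (i+1) := by
    rw [← Finset.sum_add_distrib]
    apply Finset.sum_congr rfl; intro i _; ring
  rw [R3]; ring

/-- m-th finite difference of falling factorial of degree k < m vanishes. -/
lemma findiff_ffq : ∀ (m : ℕ) (k : ℕ) (y : ℚ), k < m →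
    ∑ i ∈ range (m+1), (-1)^i * (Nat.choose m i : ℚ) * ffq (y - i) k = 0 := by
  intro m
  induction m with
  | zero => intro k y h; omega
  | succ m ih =>
    intro k y hk
    match k with
    | 0 =>
      simp only [ffq_zero, mul_one]
      have := Int.alternating_sum_range_choose_of_ne (Nat.succ_ne_zero m)
      have := congrArg (fun z : ℤ => (z : ℚ)) this
      push_cast at this
      convert this using 2
    | k+1 =>
      have hp := pascal_alt m (fun i => ffq (y - i) (k+1))
      rw [hp]
      have : ∀ i ∈ range (m+1), (-1)^i * (Nat.choose m i : ℚ) *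
          (ffq (y - i) (k+1) - ffq (y - (i+1:ℕ)) (k+1))
          = (k+1) * ((-1)^i * (Nat.choose m i : ℚ) * ffq ((y-1) - i) k) := by
        intro i _
        have : ffq (y - i) (k+1) - ffq (y - (i+1:ℕ)) (k+1) = (k+1) * ffq ((y-1) - i) k := by
          have := ffq_sub ((y-1) - i) k
          have e1 : (y-1) - (i:ℚ) + 1 = y - i := by ring
          have e2 : (y : ℚ) - ((i+1:ℕ):ℚ) = (y-1) - i := by push_cast; ring
          rw [e1] at this
          rw [e2, this]
        rw [this]; ring
      rw [Finset.sum_congr rfl this, ← Finset.mul_sum, ih k (y-1) (by omega)]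
      ring

/-- summand of the closed form for Δ -/
noncomputable def gq (n m j i : ℕ) : ℚ :=
  (-1)^(j-i) * ((Nat.factorial j * Nat.factorial (n-i) * Nat.factorial (m-j-1)
      * Nat.factorial (m-j) : ℕ) : ℚ)
    / ((Nat.factorial i * Nat.factorial (n-j) * Nat.factorial (m-i)
      * Nat.factorial (m+1-i) : ℕ) : ℚ)

noncomputable def Dlt (n m j : ℕ) : ℚ := ∑ i ∈ Finset.range (j+1), gq n m j i

lemma fac_ne (a : ℕ) : ((Nat.factorial a : ℕ) : ℚ) ≠ 0 := by
  exact_mod_cast (Nat.factorial_pos a).ne'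

lemma gq_cancel (n m j i : ℕ) (hi : i ≤ j) (hj : j + 2 ≤ m) (hn : m + 1 ≤ n) :
    ((m:ℚ)-j-1) * ((m:ℚ)-j) * gq n m (j+1) i + ((j:ℚ)+1) * ((n:ℚ)-j) * gq n m j i = 0 := by
  obtain ⟨d, hd⟩ : ∃ d, j = i + d := ⟨j - i, by omega⟩
  obtain ⟨t, ht⟩ : ∃ t, m = j + 2 + t := ⟨m - j - 2, by omega⟩
  obtain ⟨e, he⟩ : ∃ e, n = j + 3 + t + e := ⟨n - j - 3 - t, by omega⟩
  have key : ((j+1) * (n-j)) * (Nat.factorial j * Nat.factorial (n-i) * Nat.factorial (m-j-1)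
        * Nat.factorial (m-j))
      * (Nat.factorial i * Nat.factorial (n-j-1) * Nat.factorial (m-i) * Nat.factorial (m+1-i))
      = ((m-j-1) * (m-j)) * (Nat.factorial (j+1) * Nat.factorial (n-i)
        * Nat.factorial (m-j-2) * Nat.factorial (m-j-1))
      * (Nat.factorial i * Nat.factorial (n-j) * Nat.factorial (m-i) * Nat.factorial (m+1-i)) := by
    obtain ⟨u, hu⟩ : ∃ u, n - j = u + 1 := ⟨n - j - 1, by omega⟩
    rw [show m-j-2 = t from by omega, show m-j-1 = t+1 from by omega,
      show m-j = t+2 from by omega, show n-j-1 = u from by omega, hu]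
    simp only [Nat.factorial_succ]
    ring
  rw [gq, gq, show j+1-i = d+1 by omega, show j-i = d by omega]
  rw [show n-(j+1) = n-j-1 by omega, show m-(j+1)-1 = m-j-2 by omega,
    show m-(j+1) = m-j-1 by omega]
  have h1 : ((Nat.factorial i * Nat.factorial (n-j-1) * Nat.factorial (m-i)
      * Nat.factorial (m+1-i) : ℕ) : ℚ) ≠ 0 := by
    push_cast; positivity <;> exact (Nat.factorial_pos _).ne'
  have h2 : ((Nat.factorial i * Nat.factorial (n-j) * Nat.factorial (m-i)
      * Nat.factorial (m+1-i) : ℕ) : ℚ) ≠ 0 := by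
    push_cast; positivity
  have cm1 : ((m:ℚ)-j-1) = ((m-j-1 : ℕ) : ℚ) := by
    have : (m-j-1 : ℕ) = m - (j+1) := by omega
    rw [this, Nat.cast_sub (by omega)]; push_cast; ring
  have cm2 : ((m:ℚ)-j) = ((m-j : ℕ) : ℚ) := by
    rw [Nat.cast_sub (by omega)]
  have cn : ((n:ℚ)-j) = ((n-j : ℕ) : ℚ) := by
    rw [Nat.cast_sub (by omega)]
  rw [cm1, cm2, cn, pow_succ]
  field_simp
  have keyQ := congrArg (fun z : ℕ => (z : ℚ)) key
  push_cast at keyQ ⊢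
  linear_combination (-1:ℚ)^d * keyQ

lemma gq_diag (n m j : ℕ) (hj : j + 2 ≤ m) (hn : m + 1 ≤ n) :
    ((m:ℚ)-j-1) * ((m:ℚ)-j) * gq n m (j+1) (j+1) = 1 := by
  rw [gq, Nat.sub_self, pow_zero, one_mul]
  rw [show n-(j+1) = n-j-1 by omega, show m-(j+1)-1 = m-j-2 by omega,
    show m-(j+1) = m-j-1 by omega, show m+1-(j+1) = m-j by omega]
  obtain ⟨t, ht⟩ : ∃ t, m = j + 2 + t := ⟨m - j - 2, by omega⟩
  have cm1 : ((m:ℚ)-j-1) = ((t+1 : ℕ) : ℚ) := by subst ht; push_cast; ring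
  have cm2 : ((m:ℚ)-j) = ((t+2 : ℕ) : ℚ) := by subst ht; push_cast; ring
  rw [show m-j-2 = t from by omega, show m-j-1 = t+1 from by omega,
    show m-j = t+2 from by omega, cm1, cm2]
  have hB : ((Nat.factorial (j+1) * Nat.factorial (n-j-1) * Nat.factorial (t+1)
      * Nat.factorial (t+2) : ℕ) : ℚ) ≠ 0 := by push_cast; positivity
  field_simp
  push_cast [Nat.factorial_succ]
  ring

lemma Dlt_rec (n m j : ℕ) (hj : j + 2 ≤ m) (hn : m + 1 ≤ n) :
    ((m:ℚ)-j-1) * ((m:ℚ)-j) * Dlt n m (j+1) + ((j:ℚ)+1) * ((n:ℚ)-j) * Dlt n m j = 1 := by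
  rw [Dlt, Dlt, Finset.sum_range_succ, mul_add, Finset.mul_sum, Finset.mul_sum,
    gq_diag n m j hj hn]
  rw [add_right_comm, add_eq_right, ← Finset.sum_add_distrib]
  apply Finset.sum_eq_zero
  intro i hi
  exact gq_cancel n m j i (by simpa using Nat.lt_succ_iff.mp (Finset.mem_range.mp hi)) hj hn

lemma Dlt_base (n m : ℕ) (hm : 1 ≤ m) :
    (m:ℚ) * ((m:ℚ)+1) * Dlt n m 0 = 1 := by
  rw [Dlt, Finset.sum_range_one, gq]
  simp only [Nat.sub_zero, Nat.sub_self, pow_zero, one_mul]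
  obtain ⟨t, ht⟩ : ∃ t, m = t + 1 := ⟨m - 1, by omega⟩
  have cm1 : (m:ℚ) = ((t+1 : ℕ) : ℚ) := by subst ht; push_cast; ring
  have cm2 : ((m:ℚ)+1) = ((t+2 : ℕ) : ℚ) := by subst ht; push_cast; ring
  rw [cm2, cm1, show m-1 = t from by omega, show m = t+1 from ht, show t+1+1 = t+2 from rfl]
  have hB : ((Nat.factorial 0 * Nat.factorial (n-0) * Nat.factorial (t+1)
      * Nat.factorial (t+2) : ℕ) : ℚ) ≠ 0 := by push_cast; positivity
  field_simp
  push_cast [Nat.factorial_succ]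
  ring

lemma Dlt_constraint (n m : ℕ) (hn : m + 1 ≤ n) (hnm : n ≤ 2*m) :
    (m:ℚ) * ((n:ℚ)-m+1) * Dlt n m (m-1) = 1 := by
  have hm : 1 ≤ m := by omega
  set X : ℕ → ℚ := fun i => (Nat.choose m i : ℚ)
      * ((Nat.descFactorial (n-i) (n-m-1) : ℕ) : ℚ) / ((Nat.factorial (n-m) : ℕ) : ℚ) with hX
  have stepA : ∀ i, i ≤ m-1 → (m:ℚ) * ((n:ℚ)-m+1) * gq n m (m-1) i = (-1)^(m-1-i) * X i := by
    intro i hi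
    have e1 : (Nat.choose m i : ℚ) * (Nat.factorial i : ℚ) * (Nat.factorial (m-i) : ℚ)
        = (Nat.factorial m : ℚ) := by
      exact_mod_cast congrArg (fun z : ℕ => (z:ℚ))
        (Nat.choose_mul_factorial_mul_factorial (show i ≤ m from by omega))
    have e2 : (Nat.factorial (m+1-i) : ℚ) * (Nat.descFactorial (n-i) (n-m-1) : ℚ)
        = (Nat.factorial (n-i) : ℚ) := by
      have h := Nat.factorial_mul_descFactorial (n := n-i) (k := n-m-1) (by omega)
      rw [show n-i-(n-m-1) = m+1-i from by omega] at h
      exact_mod_cast congrArg (fun z : ℕ => (z:ℚ)) h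
    have e3 : (m : ℚ) * (Nat.factorial (m-1) : ℚ) = (Nat.factorial m : ℚ) := by
      obtain ⟨mp, hmp⟩ : ∃ mp, m = mp + 1 := ⟨m-1, by omega⟩
      rw [show m-1 = mp from by omega, hmp]
      exact_mod_cast congrArg (fun z : ℕ => (z:ℚ)) (Nat.factorial_succ mp).symm
    have e4 : ((n-m : ℕ) : ℚ) + 1 = ((n-m+1 : ℕ) : ℚ) := by push_cast; ring
    have e5 : (((n-m:ℕ):ℚ) + 1) * (Nat.factorial (n-m) : ℚ) = (Nat.factorial (n-m+1) : ℚ) := by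
      rw [e4]
      exact_mod_cast congrArg (fun z : ℕ => (z:ℚ)) (Nat.factorial_succ (n-m)).symm
    rw [gq, hX]
    rw [show m-(m-1)-1 = 0 from by omega, show m-(m-1) = 1 from by omega,
      show n-(m-1) = n-m+1 from by omega, show m-1-i = m-1-i from rfl]
    have cnm : ((n:ℚ)-m+1) = ((n-m : ℕ) : ℚ) + 1 := by
      rw [Nat.cast_sub (by omega : m ≤ n)]
    rw [cnm]
    have key : (m:ℚ) * (((n-m:ℕ):ℚ)+1) * ((Nat.factorial (m-1) * Nat.factorial (n-i)
          * Nat.factorial 0 * Nat.factorial 1 : ℕ):ℚ) * ((Nat.factorial (n-m) : ℕ):ℚ)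
        = ((Nat.choose m i : ℚ) * ((Nat.descFactorial (n-i) (n-m-1) : ℕ):ℚ))
          * ((Nat.factorial i * Nat.factorial (n-m+1) * Nat.factorial (m-i)
            * Nat.factorial (m+1-i) : ℕ):ℚ) := by
      push_cast [Nat.factorial_zero, Nat.factorial_one]
      linear_combination ((Nat.factorial (n-i) : ℚ) * (((n-m:ℕ):ℚ)+1)
          * (Nat.factorial (n-m) : ℚ)) * e3
        + ((Nat.factorial (n-i):ℚ) * (Nat.factorial m : ℚ)) * e5
        - (((Nat.descFactorial (n-i) (n-m-1) : ℕ) : ℚ) * (Nat.factorial (n-m+1):ℚ)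
          * (Nat.factorial (m+1-i):ℚ)) * e1
        - ((Nat.factorial m:ℚ) * (Nat.factorial (n-m+1):ℚ)) * e2
    have hD : ((Nat.factorial i * Nat.factorial (n-m+1) * Nat.factorial (m-i)
        * Nat.factorial (m+1-i) : ℕ):ℚ) ≠ 0 := by push_cast; positivity
    have hF : ((Nat.factorial (n-m) : ℕ):ℚ) ≠ 0 := by push_cast; positivity
    push_cast [Nat.factorial_zero, Nat.factorial_one] at key ⊢
    field_simp
    linear_combination key
  have stepXm : X m = 1 := by
    rw [hX]
    have e2 : Nat.factorial 1 * Nat.descFactorial (n-m) (n-m-1) = Nat.factorial (n-m) := by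
      have h := Nat.factorial_mul_descFactorial (n := n-m) (k := n-m-1) (by omega)
      rwa [show n-m-(n-m-1) = 1 from by omega] at h
    simp only [Nat.choose_self, Nat.cast_one, one_mul]
    rw [div_eq_one_iff_eq (by push_cast; positivity)]
    exact_mod_cast congrArg (fun z : ℕ => (z:ℚ)) (by simpa [Nat.factorial_one] using e2)
  have stepB : ∑ i ∈ range (m+1), (-1:ℚ)^(m-i) * X i = 0 := by
    have hcast : ∀ i ∈ range (m+1),
        (-1:ℚ)^(m-i) * X i = ((-1)^m / ((Nat.factorial (n-m) : ℕ) : ℚ))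
          * ((-1)^i * (Nat.choose m i : ℚ) * ffq ((n:ℚ) - i) (n-m-1)) := by
      intro i hi
      have him : i ≤ m := by
        have := Finset.mem_range.mp hi; omega
      have hsign : (-1:ℚ)^(m-i) * (-1)^i = (-1)^m := by
        rw [← pow_add, show m-i+i = m from by omega]
      have hdesc : ((Nat.descFactorial (n-i) (n-m-1) : ℕ) : ℚ) = ffq ((n:ℚ) - i) (n-m-1) := by
        rw [Nat.descFactorial_eq_prod_range, ffq, Nat.cast_prod]
        apply Finset.prod_congr rfl
        intro t hti
        have : t < n-m-1 := Finset.mem_range.mp hti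
        rw [show n-i-t = n-(i+t) from by omega, Nat.cast_sub (by omega)]
        push_cast
        ring
      have hsq : (-1:ℚ)^i * (-1)^i = 1 := by
        rw [← pow_add, ← two_mul, pow_mul]; norm_num
      have h3 : (-1:ℚ)^(m-i) = (-1)^m * (-1)^i := by
        rw [← hsign, mul_assoc, hsq, mul_one]
      rw [h3, hX]
      simp only []
      rw [hdesc]
      ring
    rw [Finset.sum_congr rfl hcast, ← Finset.mul_sum,
      findiff_ffq m (n-m-1) (n:ℚ) (by omega), mul_zero]
  have split : ∑ i ∈ range (m+1), (-1:ℚ)^(m-i) * X i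
      = X m - ∑ i ∈ range m, (-1:ℚ)^(m-1-i) * X i := by
    rw [Finset.sum_range_succ, Nat.sub_self, pow_zero, one_mul]
    have hterm : ∀ i ∈ range m, (-1:ℚ)^(m-i) * X i = -((-1)^(m-1-i) * X i) := by
      intro i hi
      have : i < m := Finset.mem_range.mp hi
      rw [show m-i = (m-1-i)+1 from by omega, pow_succ]
      ring
    rw [Finset.sum_congr rfl hterm, Finset.sum_neg_distrib]
    ring
  have final : ∑ i ∈ range m, (-1:ℚ)^(m-1-i) * X i = 1 := by
    have hB := stepB
    rw [split, stepXm] at hB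
    linarith
  rw [Dlt, show m-1+1 = m from by omega, Finset.mul_sum]
  rw [Finset.sum_congr rfl (fun i hi => stepA i (by
      have := Finset.mem_range.mp hi; omega))]
  exact final

noncomputable def Bq (n m j : ℕ) : ℚ :=
  ∏ i ∈ Finset.range j, (((m:ℚ)-i) * ((m:ℚ)+1-i) / ((n:ℚ)-i))

noncomputable def sigq (n m j : ℕ) : ℚ := ∑ i ∈ Finset.range j, Dlt n m i

noncomputable def uq (n m j : ℕ) : ℚ :=
  (1 + ∑ i ∈ Finset.range (m+1), |sigq n m i|) + sigq n m j

noncomputable def qqq (n m j : ℕ) : ℚ := Bq n m j * uq n m j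

lemma sigq_succ (n m j : ℕ) : sigq n m (j+1) = sigq n m j + Dlt n m j :=
  Finset.sum_range_succ _ _

lemma uq_succ (n m j : ℕ) : uq n m (j+1) = uq n m j + Dlt n m j := by
  rw [uq, uq, sigq_succ]; ring

lemma uq_pos (n m j : ℕ) (hj : j ≤ m) : 0 < uq n m j := by
  rw [uq]
  have h1 : |sigq n m j| ≤ ∑ i ∈ Finset.range (m+1), |sigq n m i| :=
    Finset.single_le_sum (f := fun i => |sigq n m i|) (fun i _ => abs_nonneg _)
      (Finset.mem_range.mpr (by omega))
  have h2 : -sigq n m j ≤ |sigq n m j| := neg_le_abs _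
  linarith

lemma Bq_succ (n m j : ℕ) :
    Bq n m (j+1) = Bq n m j * (((m:ℚ)-j) * ((m:ℚ)+1-j) / ((n:ℚ)-j)) := by
  rw [Bq, Finset.prod_range_succ, Bq]

lemma Bq_pos (n m j : ℕ) (hj : j ≤ m) (hn : m < n) : 0 < Bq n m j := by
  rw [Bq]
  apply Finset.prod_pos
  intro i hi
  have hi' : i < j := Finset.mem_range.mp hi
  have c1 : (i:ℚ) < m := by exact_mod_cast (by omega : i < m)
  have c2 : (i:ℚ) < n := by exact_mod_cast (by omega : i < n)
  apply div_pos (mul_pos (by linarith) (by linarith)) (by linarith)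

lemma Bq_zero (n m j : ℕ) (hj : m + 1 ≤ j) : Bq n m j = 0 := by
  rw [Bq]
  apply Finset.prod_eq_zero (Finset.mem_range.mpr (by omega : m < j))
  simp

lemma Bq_one (n m : ℕ) : Bq n m 0 = 1 := by simp [Bq]

lemma hB1 (n m j : ℕ) (hj : j ≤ m) (hn : m < n) :
    ((n:ℚ)-j) * Bq n m (j+1) = ((m:ℚ)-j) * ((m:ℚ)+1-j) * Bq n m j := by
  have hne : ((n:ℚ)-j) ≠ 0 := by
    have : (j:ℚ) < n := by exact_mod_cast (by omega : j < n)
    linarith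
  rw [Bq_succ]
  field_simp

/-- the key scalar recurrence for u -/
lemma keyU (n m j : ℕ) (hj : j ≤ m) (hn : m + 1 ≤ n) (hnm : n ≤ 2*m) :
    ((j:ℚ)*((n:ℚ)-j+1) - ((m:ℚ)+1-j)*((m:ℚ)-j)) * uq n m j
      + ((m:ℚ)-j)*((m:ℚ)+1-j) * uq n m (j+1)
      - (j:ℚ)*((n:ℚ)-j+1) * uq n m (j-1) = 1 := by
  match j with
  | 0 =>
    have hb := Dlt_base n m (by omega)
    rw [uq_succ]
    push_cast
    linear_combination hb
  | (jp+1) =>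
    have e1 : uq n m (jp+1+1) = uq n m (jp+1) + Dlt n m (jp+1) := uq_succ n m (jp+1)
    have e2 : uq n m (jp+1) = uq n m jp + Dlt n m jp := uq_succ n m jp
    rw [show jp+1-1 = jp from rfl, e1]
    rcases Nat.lt_or_ge (jp+1) m with hlt | hge
    · -- jp+2 ≤ m : use Dlt_rec at jp
      have hr := Dlt_rec n m jp (by omega) hn
      push_cast
      linear_combination hr + ((jp:ℚ)+1) * ((n:ℚ)-jp) * e2
    · -- jp+1 = m
      have hm : jp+1 = m := by omega
      have hc := Dlt_constraint n m hn hnm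
      have hmm : (jp:ℚ) = (m:ℚ) - 1 := by
        have : ((jp+1 : ℕ):ℚ) = (m:ℚ) := by exact_mod_cast congrArg (fun z : ℕ => (z:ℚ)) hm
        push_cast at this
        linarith
      have hdl : Dlt n m jp = Dlt n m (m-1) := by rw [show jp = m-1 from by omega]
      rw [hdl] at e2
      push_cast
      rw [hmm]
      linear_combination hc + (m:ℚ) * ((n:ℚ)-(m:ℚ)+1) * e2

/-- main recurrence: N q = B -/
lemma RQ (n m j : ℕ) (hj : j ≤ m+1) (hn : m + 1 ≤ n) (hnm : n ≤ 2*m) :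
    ((j:ℚ)*((n:ℚ)-j+1) - ((m:ℚ)+1-j)*((m:ℚ)-j)) * qqq n m j
      + ((n:ℚ)-j) * qqq n m (j+1)
      - (j:ℚ)*((m:ℚ)+2-j)*((m:ℚ)+1-j) * qqq n m (j-1) = Bq n m j := by
  rcases Nat.lt_or_ge m j with hgt | hle
  · -- j = m+1
    have hjm : j = m+1 := by omega
    subst hjm
    simp only [qqq]
    rw [Bq_zero n m (m+1) (by omega), Bq_zero n m (m+1+1) (by omega)]
    push_cast
    ring
  · match j with
    | 0 =>
      have hk := keyU n m 0 (by omega) hn hnm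
      simp only [Nat.zero_sub, Nat.cast_zero] at hk ⊢
      simp only [qqq]
      have h1 := hB1 n m 0 (by omega) (by omega)
      have h0 : Bq n m 0 = 1 := Bq_one n m
      push_cast at h1 hk ⊢
      linear_combination (uq n m 1) * h1 + (Bq n m 0) * hk
    | (jp+1) =>
      have hk := keyU n m (jp+1) hle hn hnm
      simp only [Nat.add_sub_cancel] at hk ⊢
      simp only [qqq]
      have h1 := hB1 n m (jp+1) hle (by omega)
      have h2 := hB1 n m jp (by omega) (by omega)
      push_cast at h1 h2 hk ⊢
      linear_combination (uq n m (jp+2)) * h1 + (Bq n m (jp+1)) * hk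
        + ((jp:ℚ)+1) * (uq n m jp) * h2

/-- kernel equation: N B = 0 -/
lemma KER (n m j : ℕ) (hj : j ≤ m+1) (hn : m + 1 ≤ n) :
    ((j:ℚ)*((n:ℚ)-j+1) - ((m:ℚ)+1-j)*((m:ℚ)-j)) * Bq n m j
      + ((n:ℚ)-j) * Bq n m (j+1)
      - (j:ℚ)*((m:ℚ)+2-j)*((m:ℚ)+1-j) * Bq n m (j-1) = 0 := by
  rcases Nat.lt_or_ge m j with hgt | hle
  · have hjm : j = m+1 := by omega
    subst hjm
    rw [Bq_zero n m (m+1) (by omega), Bq_zero n m (m+1+1) (by omega)]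
    push_cast
    ring
  · match j with
    | 0 =>
      have h1 := hB1 n m 0 (by omega) (by omega)
      simp only [Nat.zero_sub, Nat.cast_zero] at *
      push_cast at h1 ⊢
      linear_combination h1
    | (jp+1) =>
      have h1 := hB1 n m (jp+1) hle (by omega)
      have h2 := hB1 n m jp (by omega) (by omega)
      simp only [Nat.add_sub_cancel]
      push_cast at h1 h2 ⊢
      linear_combination h1 + ((jp:ℚ)+1) * h2

lemma qqq_pos (n m j : ℕ) (hj : j ≤ m) (hn : m < n) : 0 < qqq n m j :=
  mul_pos (Bq_pos n m j hj hn) (uq_pos n m j hj)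

lemma qqq_zero_top (n m j : ℕ) (hj : m + 1 ≤ j) : qqq n m j = 0 := by
  rw [qqq, Bq_zero n m j hj, zero_mul]

end AuxSeq15

open Finset

lemma bv_in (n : ℕ) (i k : ℤ) (h : 0 ≤ i ∧ i < (n : ℤ) + 1 ∧ 0 ≤ k) :
    bv n i k = Finsupp.single (⟨i.toNat, by omega⟩, k.toNat) (1 : ℂ) := dif_pos h

lemma bv_out (n : ℕ) (i k : ℤ) (h : ¬(0 ≤ i ∧ i < (n : ℤ) + 1 ∧ 0 ≤ k)) :
    bv n i k = 0 := dif_neg h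

lemma FM_bv (n : ℕ) (i k : ℤ) (h1 : 0 ≤ i) (h2 : i ≤ (n:ℤ)) (h3 : 0 ≤ k) :
    FM n (bv n i k) = ((i:ℂ) + 1) • bv n (i+1) k + bv n i (k+1) := by
  rw [bv_in n i k ⟨h1, by omega, h3⟩, FM, Finsupp.lsum_single, LinearMap.toSpanSingleton_apply,
    one_smul]
  have e1 : ((i.toNat : ℕ) : ℤ) = i := Int.toNat_of_nonneg h1
  have e2 : ((k.toNat : ℕ) : ℤ) = k := Int.toNat_of_nonneg h3
  have e3 : ((i.toNat : ℕ) : ℂ) = (i : ℂ) := by exact_mod_cast congrArg (fun z : ℤ => (z:ℂ)) e1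
  simp only [e1, e2, e3]

lemma EM_bv (n : ℕ) (i k : ℤ) (h1 : 0 ≤ i) (h2 : i ≤ (n:ℤ)) (h3 : 0 ≤ k) :
    EM n (bv n i k) = ((n:ℂ) - (i:ℂ) + 1) • bv n (i-1) k
      - ((k:ℂ) * ((k:ℂ) - 1)) • bv n i (k-1) := by
  rw [bv_in n i k ⟨h1, by omega, h3⟩, EM, Finsupp.lsum_single, LinearMap.toSpanSingleton_apply,
    one_smul]
  have e1 : ((i.toNat : ℕ) : ℤ) = i := Int.toNat_of_nonneg h1
  have e2 : ((k.toNat : ℕ) : ℤ) = k := Int.toNat_of_nonneg h3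
  have e3 : ((i.toNat : ℕ) : ℂ) = (i : ℂ) := by exact_mod_cast congrArg (fun z : ℤ => (z:ℂ)) e1
  have e4 : ((k.toNat : ℕ) : ℂ) = (k : ℂ) := by exact_mod_cast congrArg (fun z : ℤ => (z:ℂ)) e2
  simp only [e1, e2, e3, e4]

lemma HM_bv (n : ℕ) (i k : ℤ) (h1 : 0 ≤ i) (h2 : i ≤ (n:ℤ)) (h3 : 0 ≤ k) :
    HM n (bv n i k) = ((n:ℂ) - 2*(i:ℂ) - 2*(k:ℂ)) • bv n i k := by
  rw [bv_in n i k ⟨h1, by omega, h3⟩, HM, Finsupp.lsum_single, LinearMap.toSpanSingleton_apply,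
    one_smul]
  have e1 : ((i.toNat : ℕ) : ℤ) = i := Int.toNat_of_nonneg h1
  have e2 : ((k.toNat : ℕ) : ℤ) = k := Int.toNat_of_nonneg h3
  have e3 : ((i.toNat : ℕ) : ℂ) = (i : ℂ) := by exact_mod_cast congrArg (fun z : ℤ => (z:ℂ)) e1
  have e4 : ((k.toNat : ℕ) : ℂ) = (k : ℂ) := by exact_mod_cast congrArg (fun z : ℤ => (z:ℂ)) e2
  simp only [e1, e2, e3, e4]
  rw [bv_in n i k ⟨h1, by omega, h3⟩]

noncomputable def ev (n m : ℕ) (j : ℤ) : TM n := bv n j ((m:ℤ)+1-j)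

lemma Cas_ev (n m : ℕ) (hmn : m+1 ≤ n) (j : ℤ) (h0 : 0 ≤ j) (h1 : j ≤ (m:ℤ)+1) :
    CasM n (ev n m j) =
      (((n:ℂ)-2*(m:ℂ)-2)^2 + 2*((n:ℂ)-2*(m:ℂ)-2)
        + 4*((j:ℂ)*((n:ℂ)-(j:ℂ)+1) - ((m:ℂ)+1-(j:ℂ))*(((m:ℂ)+1-(j:ℂ))-1))) • ev n m j
      + (4*((n:ℂ)-(j:ℂ)+1)) • ev n m (j-1)
      - (4*((m:ℂ)+1-(j:ℂ))*(((m:ℂ)+1-(j:ℂ))-1)*((j:ℂ)+1)) • ev n m (j+1) := by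
  have hjn : j ≤ (n:ℤ) := by omega
  have hk0 : (0:ℤ) ≤ (m:ℤ)+1-j := by omega
  have hkC : ((((m:ℤ)+1-j) : ℤ) : ℂ) = (m:ℂ)+1-(j:ℂ) := by push_cast; ring
  -- H action
  have hH : HM n (ev n m j) = ((n:ℂ)-2*(m:ℂ)-2) • ev n m j := by
    rw [ev, HM_bv n j _ h0 hjn hk0, hkC]
    congr 1
    ring
  -- E action
  have hE : EM n (ev n m j) = ((n:ℂ)-(j:ℂ)+1) • bv n (j-1) ((m:ℤ)+1-j)
      - (((m:ℂ)+1-(j:ℂ))*(((m:ℂ)+1-(j:ℂ))-1)) • bv n j ((m:ℤ)+1-j-1) := by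
    rw [ev, EM_bv n j _ h0 hjn hk0, hkC]
  -- F on first piece
  have hF1 : FM n (bv n (j-1) ((m:ℤ)+1-j)) = (j:ℂ) • ev n m j + ev n m (j-1) := by
    rcases eq_or_lt_of_le h0 with h | h
    · -- j = 0
      rw [bv_out n (j-1) _ (by omega), map_zero, ev, ev,
        bv_out n (j-1) _ (by omega), ← h]
      simp
    · rw [FM_bv n (j-1) _ (by omega) (by omega) hk0]
      have c1 : (((j-1 : ℤ)) : ℂ) + 1 = (j:ℂ) := by push_cast; ring
      rw [c1, show j-1+1 = j from by ring, show (m:ℤ)+1-j+1 = (m:ℤ)+1-(j-1) from by ring]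
      rfl
  -- F on second piece (valid when j ≤ m)
  rcases Nat.lt_or_ge m j.toNat with htop | hle
  · -- j = m+1
    have hjm : j = (m:ℤ)+1 := by omega
    have hκ : ((m:ℂ)+1-(j:ℂ)) = 0 := by rw [hjm]; push_cast; ring
    rw [CasM]
    simp only [LinearMap.add_apply, LinearMap.smul_apply, Module.End.mul_apply]
    rw [hE, hκ]
    simp only [zero_mul, mul_zero, zero_smul, sub_zero, map_smul, hF1, hH]
    module
  · -- j ≤ m
    have hjm : j ≤ (m:ℤ) := by omega
    have hF2 : FM n (bv n j ((m:ℤ)+1-j-1)) = ((j:ℂ)+1) • ev n m (j+1) + ev n m j := by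
      rw [FM_bv n j _ h0 hjn (by omega)]
      rw [show (m:ℤ)+1-j-1 = (m:ℤ)+1-(j+1) from by ring, show (m:ℤ)+1-(j+1)+1 = (m:ℤ)+1-j from by ring]
      rfl
    rw [CasM]
    simp only [LinearMap.add_apply, LinearMap.smul_apply, Module.End.mul_apply]
    rw [hE, map_sub, map_smul, map_smul, hF1,
      show (m:ℤ)+1-j-1 = (m:ℤ)+1-(j+1) from by ring]
    rw [show bv n j ((m:ℤ)+1-(j+1)) = bv n j ((m:ℤ)+1-j-1) from by rw [show (m:ℤ)+1-(j+1) = (m:ℤ)+1-j-1 from by ring]]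
    rw [hF2, hH, map_smul, hH]
    module

lemma calc_main (n m : ℕ) (hmn : m+1 ≤ n) (csc : ℂ)
    (hcs : ((n:ℂ)-2*(m:ℂ)-2)^2 + 2*((n:ℂ)-2*(m:ℂ)-2) = csc)
    (c : ℕ → ℂ) (hc : ∀ i, m+1 ≤ i → c i = 0) :
    (CasM n - csc • (1 : Module.End ℂ (TM n))) (∑ j ∈ Finset.range (m+2), c j • ev n m (j:ℤ))
      = ∑ j ∈ Finset.range (m+2),
          (4*((((j:ℂ)*((n:ℂ)-(j:ℂ)+1) - ((m:ℂ)+1-(j:ℂ))*((m:ℂ)-(j:ℂ))) * c j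
            + ((n:ℂ)-(j:ℂ)) * c (j+1)
            - (j:ℂ)*((m:ℂ)+2-(j:ℂ))*((m:ℂ)+1-(j:ℂ)) * c (j-1)))) • ev n m (j:ℤ) := by
  have hterm : ∀ j ∈ range (m+2),
      (CasM n - csc • (1 : Module.End ℂ (TM n))) (c j • ev n m (j:ℤ))
      = (4*(((j:ℂ)*((n:ℂ)-(j:ℂ)+1) - ((m:ℂ)+1-(j:ℂ))*((m:ℂ)-(j:ℂ))) * c j)) • ev n m (j:ℤ)
        + ((4*((n:ℂ)-(j:ℂ)+1)) * c j) • ev n m ((j:ℤ)-1)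
        + (-(4*((m:ℂ)+1-(j:ℂ))*(((m:ℂ)+1-(j:ℂ))-1)*((j:ℂ)+1)) * c j) • ev n m ((j:ℤ)+1) := by
    intro j hj
    have hjm : (j:ℤ) ≤ (m:ℤ)+1 := by
      have := Finset.mem_range.mp hj; exact_mod_cast (by omega : (j:ℤ) ≤ (m:ℤ)+1)
    rw [LinearMap.sub_apply, LinearMap.smul_apply, Module.End.one_apply,
      map_smul, Cas_ev n m hmn (j:ℤ) (by positivity) hjm]
    rw [← hcs]
    module
  rw [map_sum, Finset.sum_congr rfl hterm, Finset.sum_add_distrib, Finset.sum_add_distrib]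
  -- middle sum: shift down
  have key2 : ∑ j ∈ range (m+2), ((4*((n:ℂ)-(j:ℂ)+1)) * c j) • ev n m ((j:ℤ)-1)
      = ∑ j ∈ range (m+2), (4*(((n:ℂ)-(j:ℂ)) * c (j+1))) • ev n m (j:ℤ) := by
    rw [Finset.sum_range_succ' (fun j => ((4*((n:ℂ)-(j:ℂ)+1)) * c j) • ev n m ((j:ℤ)-1)) (m+1)]
    have hev : ev n m (((0:ℕ):ℤ)-1) = 0 := by
      rw [show (((0:ℕ):ℤ)-1 : ℤ) = -1 from by norm_num, ev]
      exact bv_out n (-1) _ (by omega)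
    rw [hev, smul_zero, add_zero]
    rw [Finset.sum_range_succ (fun j => (4*(((n:ℂ)-(j:ℂ)) * c (j+1))) • ev n m (j:ℤ)) (m+1)]
    rw [hc (m+2) (by omega), mul_zero, mul_zero, zero_smul, add_zero]
    apply Finset.sum_congr rfl
    intro i _
    have e1 : (((i+1:ℕ):ℤ)-1 : ℤ) = (i:ℤ) := by push_cast; ring
    rw [e1]
    congr 1
    push_cast; ring
  -- last sum: shift up
  have key3 : ∑ j ∈ range (m+2),
        (-(4*((m:ℂ)+1-(j:ℂ))*(((m:ℂ)+1-(j:ℂ))-1)*((j:ℂ)+1)) * c j) • ev n m ((j:ℤ)+1)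
      = ∑ j ∈ range (m+2),
        (4*(-((j:ℂ)*((m:ℂ)+2-(j:ℂ))*((m:ℂ)+1-(j:ℂ)) * c (j-1)))) • ev n m (j:ℤ) := by
    rw [Finset.sum_range_succ (fun j =>
      (-(4*((m:ℂ)+1-(j:ℂ))*(((m:ℂ)+1-(j:ℂ))-1)*((j:ℂ)+1)) * c j) • ev n m ((j:ℤ)+1)) (m+1)]
    have hev2 : ev n m (((m+1:ℕ):ℤ)+1) = 0 := by
      rw [ev]
      apply bv_out
      push_cast
      omega
    rw [hev2, smul_zero, add_zero]
    rw [Finset.sum_range_succ' (fun j =>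
      (4*(-((j:ℂ)*((m:ℂ)+2-(j:ℂ))*((m:ℂ)+1-(j:ℂ)) * c (j-1)))) • ev n m (j:ℤ)) (m+1)]
    have hz0 : (4*(-(((0:ℕ):ℂ)*((m:ℂ)+2-((0:ℕ):ℂ))*((m:ℂ)+1-((0:ℕ):ℂ)) * c (0-1))))
        • ev n m ((0:ℕ):ℤ) = 0 := by
      simp
    rw [hz0, add_zero]
    apply Finset.sum_congr rfl
    intro i _
    have e1 : ((i:ℤ)+1 : ℤ) = ((i+1:ℕ):ℤ) := by push_cast; ring
    rw [e1, show (i+1)-1 = i from rfl]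
    congr 1
    push_cast; ring
  rw [key2, key3, ← Finset.sum_add_distrib, ← Finset.sum_add_distrib]
  apply Finset.sum_congr rfl
  intro j _
  rw [← add_smul, ← add_smul]
  congr 1
  ring

lemma den_mul_self (x : ℚ) : (x.den : ℚ) * x = (x.num : ℚ) := by
  have h := Rat.num_div_den x
  have hd : ((x.den : ℕ) : ℚ) ≠ 0 := by exact_mod_cast x.den_ne_zero
  calc (x.den:ℚ) * x = (x.den:ℚ) * ((x.num:ℚ)/(x.den:ℚ)) := by rw [h]
    _ = (x.num:ℚ) := by field_simp

lemma HM_ev (n m : ℕ) (hmn : m+1 ≤ n) (j : ℤ) (h0 : 0 ≤ j) (h1 : j ≤ (m:ℤ)+1) :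
    HM n (ev n m j) = ((n:ℂ)-2*(m:ℂ)-2) • ev n m j := by
  rw [ev, HM_bv n j _ h0 (by omega) (by omega)]
  congr 1
  push_cast
  ring


/-- Fix `n ≥ 2` and `0 ≤ s ≤ n-2` with `n - s` even, and `c = s(s+2)`.  There
exist positive integers `q_0, …, q_{(n+s)/2}` such that
`a = Σ_{j=0}^{(n+s)/2} q_j · (v_j ⊗ w_{(n+s+2)/2 - j})` satisfies
`H(a) = (-s-2)·a`, `(Ω - c)²(a) = 0` and `(Ω - c)(a) ≠ 0`; such an `a` is a
weight vector of weight `-s-2` generating `T_s` inside `L_n ⊗ V_0`. -/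
theorem stmt15 (n s : ℕ) (hn : 2 ≤ n) (hs : s ≤ n - 2) (hpar : (n - s) % 2 = 0) :
    ∃ q : ℕ → ℕ, (∀ j ≤ (n + s) / 2, 0 < q j) ∧
      (let a : TM n := ∑ j ∈ Finset.range ((n + s) / 2 + 1),
          ((q j : ℂ)) • bv n (j : ℤ) ((((n + s + 2) / 2 : ℕ) : ℤ) - (j : ℤ));
        HM n a = (-(s : ℂ) - 2) • a ∧
        ((CasM n - ((s : ℂ) * ((s : ℂ) + 2)) • (1 : Module.End ℂ (TM n))) ^ 2) a = 0 ∧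
        (CasM n - ((s : ℂ) * ((s : ℂ) + 2)) • (1 : Module.End ℂ (TM n))) a ≠ 0) := by
  set m := (n + s) / 2 with hmdef
  have hm2 : 2 * m = n + s := by omega
  have hmn : m + 1 ≤ n := by omega
  have hn2m : n ≤ 2 * m := by omega
  have hm1 : 1 ≤ m := by omega
  have htop : (n + s + 2) / 2 = m + 1 := by omega
  -- the scaling factor
  set P : ℕ := ∏ j ∈ Finset.range (m+2), (qqq n m j).den with hPdef
  have hPpos : 0 < P := Finset.prod_pos (fun j _ => (qqq n m j).den_pos)
  set q : ℕ → ℕ := fun j => ((P:ℚ) * qqq n m j).num.toNat with hqdef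
  -- integrality
  have hint : ∀ j, j ≤ m+1 → ((q j : ℕ) : ℚ) = (P:ℚ) * qqq n m j := by
    intro j hj
    obtain ⟨t, ht⟩ : (qqq n m j).den ∣ P :=
      Finset.dvd_prod_of_mem (fun i => (qqq n m i).den) (Finset.mem_range.mpr (by omega))
    have hz : (P:ℚ) * qqq n m j = ((t * (qqq n m j).num : ℤ) : ℚ) := by
      rw [ht]
      push_cast
      rw [mul_comm ((qqq n m j).den : ℚ) (t:ℚ), mul_assoc, den_mul_self]
    have hnn : (0:ℚ) ≤ (P:ℚ) * qqq n m j := by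
      rcases Nat.lt_or_ge m j with h | h
      · rw [qqq_zero_top n m j (by omega), mul_zero]
      · exact mul_nonneg (by positivity) (qqq_pos n m j h (by omega)).le
    have hz0 : (0:ℤ) ≤ t * (qqq n m j).num := by
      have : ((t * (qqq n m j).num : ℤ) : ℚ) ≥ 0 := by rw [← hz]; exact hnn
      exact_mod_cast this
    calc ((q j : ℕ):ℚ) = (((t*(qqq n m j).num).toNat : ℕ) : ℚ) := by
          rw [hqdef]; simp only [hz, Rat.num_intCast]
      _ = (((t*(qqq n m j).num) : ℤ) : ℚ) := by
          exact_mod_cast congrArg (fun z : ℤ => (z:ℚ)) (Int.toNat_of_nonneg hz0)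
      _ = (P:ℚ) * qqq n m j := hz.symm
  -- positivity
  have hqpos : ∀ j, j ≤ m → 0 < q j := by
    intro j hj
    have h1 : 0 < (P:ℚ) * qqq n m j :=
      mul_pos (by exact_mod_cast hPpos) (qqq_pos n m j hj (by omega))
    have h2 : 0 < ((P:ℚ) * qqq n m j).num := Rat.num_pos.mpr h1
    simp only [hqdef]
    omega
  refine ⟨q, fun j hj => hqpos j (by omega), ?_⟩
  intro a
  -- rewrite a as a sum over range (m+2) of cq j • ev j
  set cq : ℕ → ℂ := fun j => if j ≤ m then ((q j : ℕ):ℂ) else 0 with hcqdef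
  have hcq_top : ∀ i, m+1 ≤ i → cq i = 0 := by
    intro i hi
    simp only [hcqdef, if_neg (by omega : ¬ i ≤ m)]
  have ha : a = ∑ j ∈ Finset.range (m+2), cq j • ev n m (j:ℤ) := by
    show (∑ j ∈ Finset.range (m + 1),
        ((q j : ℂ)) • bv n (j : ℤ) ((((n + s + 2) / 2 : ℕ) : ℤ) - (j : ℤ))) = _
    rw [Finset.sum_range_succ (fun j => cq j • ev n m (j:ℤ)) (m+1),
      hcq_top (m+1) (by omega), zero_smul, add_zero]
    apply Finset.sum_congr rfl
    intro j hj
    have hjm : j ≤ m := by have := Finset.mem_range.mp hj; omega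
    rw [hcqdef]
    simp only [if_pos hjm]
    rw [htop, show (((m+1:ℕ):ℤ) - (j:ℤ)) = ((m:ℤ)+1-(j:ℤ)) from by push_cast; ring, ev]
  -- weight relation
  have hw : ((n:ℂ)-2*(m:ℂ)-2) = -(s:ℂ)-2 := by
    have : ((2*m : ℕ) : ℂ) = ((n+s : ℕ) : ℂ) := by rw [hm2]
    push_cast at this
    linear_combination -this
  have hcs : ((n:ℂ)-2*(m:ℂ)-2)^2 + 2*((n:ℂ)-2*(m:ℂ)-2) = (s:ℂ)*((s:ℂ)+2) := by
    rw [hw]; ring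
  constructor
  · -- H action
    rw [ha, map_sum]
    rw [Finset.smul_sum]
    apply Finset.sum_congr rfl
    intro j hj
    have hjm : (j:ℤ) ≤ (m:ℤ)+1 := by
      have := Finset.mem_range.mp hj
      exact_mod_cast (by omega : (j:ℤ) ≤ (m:ℤ)+1)
    rw [map_smul, HM_ev n m hmn (j:ℤ) (by positivity) hjm, hw, smul_comm]
  -- Casimir coefficients after one application
  set cB : ℕ → ℂ := fun j => (((4*(P:ℚ)*Bq n m j : ℚ)) : ℂ) with hcBdef
  have hcq_all : ∀ j, j ≤ m+2 → cq j = ((((P:ℚ) * qqq n m j) : ℚ) : ℂ) := by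
    intro j hj
    rcases Nat.lt_or_ge m j with h | h
    · rw [hcq_top j (by omega), qqq_zero_top n m j (by omega), mul_zero]
      norm_num
    · rw [hcqdef]
      simp only [if_pos h]
      rw [← hint j (by omega)]
      push_cast
      ring
  have step1 : (CasM n - ((s : ℂ) * ((s : ℂ) + 2)) • (1 : Module.End ℂ (TM n))) a
      = ∑ j ∈ Finset.range (m+2), cB j • ev n m (j:ℤ) := by
    rw [ha, calc_main n m hmn _ hcs cq hcq_top]
    apply Finset.sum_congr rfl
    intro j hj
    have hjm : j ≤ m+1 := by have := Finset.mem_range.mp hj; omega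
    congr 1
    rw [hcq_all j (by omega), hcq_all (j+1) (by omega), hcq_all (j-1) (by omega), hcBdef]
    have hrq := RQ n m j hjm hmn hn2m
    have hrqC := congrArg (fun x : ℚ => (x:ℂ)) hrq
    push_cast at hrqC ⊢
    linear_combination 4*(P:ℂ) * hrqC
  have hcB_top : ∀ i, m+1 ≤ i → cB i = 0 := by
    intro i hi
    rw [hcBdef]
    simp only []
    rw [Bq_zero n m i hi, mul_zero]
    norm_num
  constructor
  · -- (Ω - c)^2 a = 0
    rw [pow_two, Module.End.mul_apply, step1, calc_main n m hmn _ hcs cB hcB_top]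
    apply Finset.sum_eq_zero
    intro j hj
    have hjm : j ≤ m+1 := by have := Finset.mem_range.mp hj; omega
    have hker := KER n m j hjm hmn
    have hkerC := congrArg (fun x : ℚ => (x:ℂ)) hker
    have hcoef : (4*((((j:ℂ)*((n:ℂ)-(j:ℂ)+1) - ((m:ℂ)+1-(j:ℂ))*((m:ℂ)-(j:ℂ))) * cB j
        + ((n:ℂ)-(j:ℂ)) * cB (j+1)
        - (j:ℂ)*((m:ℂ)+2-(j:ℂ))*((m:ℂ)+1-(j:ℂ)) * cB (j-1)))) = 0 := by
      rw [hcBdef]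
      push_cast at hkerC ⊢
      linear_combination 16*(P:ℂ) * hkerC
    rw [hcoef, zero_smul]
  · -- (Ω - c) a ≠ 0
    rw [step1]
    intro hcon
    have hpt := congrArg (fun f : TM n => f (⟨0, by omega⟩, m+1)) hcon
    simp only [Finsupp.coe_zero, Pi.zero_apply] at hpt
    rw [Finsupp.finset_sum_apply] at hpt
    have heval : ∀ j ∈ Finset.range (m+2),
        (cB j • ev n m (j:ℤ)) (⟨0, by omega⟩, m+1) = if j = 0 then cB 0 else 0 := by
      intro j hj
      have hjm : j ≤ m+1 := by have := Finset.mem_range.mp hj; omega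
      rw [ev, bv_in n (j:ℤ) _ ⟨by positivity, by exact_mod_cast (by omega : (j:ℤ) < (n:ℤ)+1), by exact_mod_cast (by omega : (0:ℤ) ≤ (m:ℤ)+1-(j:ℤ))⟩]
      rw [Finsupp.smul_apply, Finsupp.single_apply]
      rcases eq_or_ne j 0 with h0 | h0
      · subst h0
        have hidx : ((⟨((0:ℕ):ℤ).toNat, by omega⟩ : Fin (n+1)), ((m:ℤ)+1-((0:ℕ):ℤ)).toNat)
            = ((⟨0, by omega⟩ : Fin (n+1)), m+1) := by
          refine Prod.ext ?_ ?_
          · apply Fin.ext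
            simp
          · simp only []
            omega
        rw [if_pos hidx, if_pos rfl]
        simp
      · rw [if_neg, if_neg h0, smul_zero]
        intro hcontra
        apply h0
        have hfst := congrArg Prod.fst hcontra
        have hval := congrArg Fin.val hfst
        simp only [Int.toNat_natCast] at hval
        exact hval
    rw [Finset.sum_congr rfl heval] at hpt
    rw [Finset.sum_ite_eq' (Finset.range (m+2)) 0 (fun _ => cB 0)] at hpt
    rw [if_pos (Finset.mem_range.mpr (by omega))] at hpt
    rw [hcBdef] at hpt
    simp only [] at hpt
    rw [Bq_one n m] at hpt
    have : ((4*(P:ℚ) : ℚ) : ℂ) ≠ 0 := by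
      have : (0:ℚ) < 4*(P:ℚ) := by positivity
      exact_mod_cast this.ne'
    rw [mul_one] at hpt
    exact this hpt
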